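/- arXiv:2503.03676 — 2 statements merged into one kernel-verified Lean document; each statement's English description precedes it below -/
import Mathlib

section
/- Given any mixed strategy σ on A, there exists a utility function u for which σ is a strict correlated equilibrium (sCE) if and only if for all players i ∈ [n] and all pairs of σ-supported actions j, k ∈ A_i with j ≠ k, the conditionals satisfy σ_{ij} ≠ σ_{ik}. -/
open scoped BigOperators

section Prelim

variable {n : ℕ}

/-- Joint action obtained from player `i`'s action `j` and the other players' actions `b`,
i.e. the joint action `(j, a_{-i})`. -/
def joinA {A : Fin n → Type*} (i : Fin n) (j : A i)
    (b : ∀ l : {l : Fin n // l ≠ i}, A l) : ∀ l, A l :=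
  fun l => if h : l = i then h.symm ▸ j else b ⟨l, h⟩

/-- The actions `a_{-i}` of all players other than `i` in the joint action `a`. -/
def restr {A : Fin n → Type*} (i : Fin n) (a : ∀ l, A l) :
    ∀ l : {l : Fin n // l ≠ i}, A l :=
  fun l => a l

/-- `σ` is a mixed strategy: nonnegative and sums to one. -/
def IsMixed {X : Type*} [Fintype X] (σ : X → ℝ) : Prop :=
  (∀ x, 0 ≤ σ x) ∧ ∑ x, σ x = 1

/-- Marginal probability `p_{ij}` that player `i` plays `j` under `σ`. -/
noncomputable def marg {A : Fin n → Type*} [∀ l, Fintype (A l)]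
    (σ : (∀ l, A l) → ℝ) (i : Fin n) (j : A i) : ℝ :=
  ∑ b : ∀ l : {l : Fin n // l ≠ i}, A l, σ (joinA i j b)

/-- Conditional distribution `σ_{ij}` over the other players' actions:
`σ_{ij}(a_{-i}) = σ(j, a_{-i}) / p_{ij}` if `p_{ij} > 0`, and the zero function otherwise. -/
noncomputable def condl {A : Fin n → Type*} [∀ l, Fintype (A l)]
    (σ : (∀ l, A l) → ℝ) (i : Fin n) (j : A i) :
    (∀ l : {l : Fin n // l ≠ i}, A l) → ℝ :=
  fun b => if 0 < marg σ i j then σ (joinA i j b) / marg σ i j else 0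

/-- Euclidean norm `‖·‖₂` on `ℝ^X`. -/
noncomputable def norm2 {X : Type*} [Fintype X] (f : X → ℝ) : ℝ :=
  Real.sqrt (∑ x, f x ^ 2)

/-- Euclidean inner product `⟨·,·⟩` on `ℝ^X`. -/
noncomputable def inner2 {X : Type*} [Fintype X] (f g : X → ℝ) : ℝ :=
  ∑ x, f x * g x

/-- The witness utility `w_i(j, a_{-i}) = σ_{ij}(a_{-i}) / ‖σ_{ij}‖₂` if `p_{ij} > 0`,
and `0` otherwise. -/
noncomputable def wit {A : Fin n → Type*} [∀ l, Fintype (A l)]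
    (σ : (∀ l, A l) → ℝ) (i : Fin n) (a : ∀ l, A l) : ℝ :=
  if 0 < marg σ i (a i) then condl σ i (a i) (restr i a) / norm2 (condl σ i (a i)) else 0

open Classical in
/-- `t_{ijk} = ‖σ_{ij}‖₂ - ⟨σ_{ij}, σ_{ik}⟩ / ‖σ_{ik}‖₂` if `σ_{ik} ≠ 0`,
and `t_{ijk} = ‖σ_{ij}‖₂` if `σ_{ik} = 0`. -/
noncomputable def tq {A : Fin n → Type*} [∀ l, Fintype (A l)]
    (σ : (∀ l, A l) → ℝ) (i : Fin n) (j k : A i) : ℝ :=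
  if condl σ i k = 0 then norm2 (condl σ i j)
  else norm2 (condl σ i j) - inner2 (condl σ i j) (condl σ i k) / norm2 (condl σ i k)

end Prelim


/-- Strict Cauchy–Schwarz for distinct probability-like vectors. -/
lemma strict_cs {X : Type*} [Fintype X] (f g : X → ℝ)
    (hf : ∑ x, f x = 1) (hg : ∑ x, g x = 1) (hne : f ≠ g) :
    ∑ x, f x * g x < Real.sqrt (∑ x, f x ^ 2) * Real.sqrt (∑ x, g x ^ 2) := by
  set F := ∑ x, f x ^ 2 with hF
  set G := ∑ x, g x ^ 2 with hG
  set I := ∑ x, f x * g x with hI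
  have hF0 : 0 ≤ F := Finset.sum_nonneg fun x _ => sq_nonneg _
  have hG0 : 0 ≤ G := Finset.sum_nonneg fun x _ => sq_nonneg _
  have hfne : f ≠ 0 := by
    intro h; rw [h] at hf; simp at hf
  have hFpos : 0 < F := by
    obtain ⟨x, hx⟩ := Function.ne_iff.mp hfne
    exact Finset.sum_pos' (fun y _ => sq_nonneg _)
      ⟨x, Finset.mem_univ x, (sq_nonneg _).lt_of_ne' (pow_ne_zero 2 hx)⟩
  have hcs : I ^ 2 ≤ F * G := Finset.sum_mul_sq_le_sq_mul_sq _ f g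
  have hle : I ≤ Real.sqrt F * Real.sqrt G := by
    rw [← Real.sqrt_mul hF0]
    calc I ≤ |I| := le_abs_self I
    _ = Real.sqrt (I ^ 2) := (Real.sqrt_sq_eq_abs I).symm
    _ ≤ Real.sqrt (F * G) := Real.sqrt_le_sqrt hcs
  rcases lt_or_eq_of_le hle with h | h
  · exact h
  exfalso
  -- equality case: consider h x = sqrt G * f x - sqrt F * g x
  set sF := Real.sqrt F
  set sG := Real.sqrt G
  have hsF : sF ^ 2 = F := Real.sq_sqrt hF0
  have hsG : sG ^ 2 = G := Real.sq_sqrt hG0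
  have hsFpos : 0 < sF := Real.sqrt_pos.mpr hFpos
  have hsum : ∑ x, (sG * f x - sF * g x) ^ 2 = 0 := by
    have : ∑ x, (sG * f x - sF * g x) ^ 2
        = sG ^ 2 * F + sF ^ 2 * G - 2 * sF * sG * I := by
      have : ∀ x, (sG * f x - sF * g x) ^ 2
          = sG ^ 2 * f x ^ 2 + sF ^ 2 * g x ^ 2 - 2 * sF * sG * (f x * g x) := by
        intro x; ring
      simp only [this, Finset.sum_add_distrib, Finset.sum_sub_distrib, ← Finset.mul_sum]
      rfl
    rw [this, h, ← hsF, ← hsG]; ring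
  have hzero : ∀ x, sG * f x - sF * g x = 0 := by
    intro x
    have := (Finset.sum_eq_zero_iff_of_nonneg (fun y _ => sq_nonneg (sG * f y - sF * g y))).mp
      hsum x (Finset.mem_univ x)
    exact (pow_eq_zero_iff two_ne_zero).mp this
  have hsum2 : sG * (∑ x, f x) - sF * (∑ x, g x) = 0 := by
    rw [Finset.mul_sum, Finset.mul_sum, ← Finset.sum_sub_distrib]
    exact Finset.sum_eq_zero fun x _ => hzero x
  rw [hf, hg, mul_one, mul_one, sub_eq_zero] at hsum2
  apply hne
  funext x
  have := hzero x
  rw [hsum2, ← mul_sub, mul_eq_zero] at this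
  rcases this with h' | h'
  · exact absurd h' (ne_of_gt hsFpos)
  · linarith [sub_eq_zero.mp h']

section Aux

variable {n : ℕ} {A : Fin n → Type*} [∀ l, Fintype (A l)]

lemma joinA_same (i : Fin n) (j : A i) (b : ∀ l : {l : Fin n // l ≠ i}, A l) :
    joinA i j b i = j := by simp [joinA]

lemma restr_joinA (i : Fin n) (j : A i) (b : ∀ l : {l : Fin n // l ≠ i}, A l) :
    restr i (joinA i j b) = b := by
  funext l
  simp [restr, joinA, l.2]

lemma condl_sum (σ : (∀ l, A l) → ℝ) (i : Fin n) (j : A i) (h : 0 < marg σ i j) :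
    ∑ b, condl σ i j b = 1 := by
  simp only [condl, if_pos h, ← Finset.sum_div]
  exact div_self (ne_of_gt h)

lemma sum_sq_pos_of_sum_one {X : Type*} [Fintype X] (f : X → ℝ) (hf : ∑ x, f x = 1) :
    0 < ∑ x, f x ^ 2 := by
  have hfne : f ≠ 0 := by intro h; rw [h] at hf; simp at hf
  obtain ⟨x, hx⟩ := Function.ne_iff.mp hfne
  exact Finset.sum_pos' (fun y _ => sq_nonneg _)
    ⟨x, Finset.mem_univ x, (sq_nonneg _).lt_of_ne' (pow_ne_zero 2 hx)⟩

lemma norm2_pos_of_sum_one {X : Type*} [Fintype X] (f : X → ℝ) (hf : ∑ x, f x = 1) :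
    0 < norm2 f :=
  Real.sqrt_pos.mpr (sum_sq_pos_of_sum_one f hf)

lemma sum_sq_eq_norm2_sq {X : Type*} [Fintype X] (f : X → ℝ) :
    ∑ x, f x ^ 2 = norm2 f ^ 2 :=
  (Real.sq_sqrt (Finset.sum_nonneg fun x _ => sq_nonneg _)).symm

end Aux

/-- **sCE installability (Theorem `sCE`).** A mixed strategy `σ` is strictly
CE-installable iff for every player `i` and all pairs of `σ`-supported actions `j ≠ k`,
the conditionals differ: `σ_{ij} ≠ σ_{ik}`. -/
theorem sCE_installable_iff {n : ℕ} {A : Fin n → Type*}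
    [∀ l, Fintype (A l)] [∀ l, Nonempty (A l)]
    (σ : (∀ l, A l) → ℝ) (hσ : IsMixed σ) :
    (∃ u : Fin n → (∀ l, A l) → ℝ,
      ∀ i : Fin n, ∀ j : A i, 0 < marg σ i j → ∀ k : A i, k ≠ j →
        0 < ∑ b : ∀ l : {l : Fin n // l ≠ i}, A l,
              condl σ i j b * (u i (joinA i j b) - u i (joinA i k b))) ↔
      (∀ i : Fin n, ∀ j k : A i, 0 < marg σ i j → 0 < marg σ i k → j ≠ k →
        condl σ i j ≠ condl σ i k) := by
  constructor
  · rintro ⟨u, hu⟩ i j k hj hk hjk heq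
    have h1 := hu i j hj k (Ne.symm hjk)
    have h2 := hu i k hk j hjk
    rw [heq] at h1
    have hpos : (0:ℝ) < ∑ b : ∀ l : {l : Fin n // l ≠ i}, A l,
        (condl σ i k b * (u i (joinA i j b) - u i (joinA i k b))
          + condl σ i k b * (u i (joinA i k b) - u i (joinA i j b))) := by
      rw [Finset.sum_add_distrib]; exact add_pos h1 h2
    have hzero : (∑ b : ∀ l : {l : Fin n // l ≠ i}, A l,
        (condl σ i k b * (u i (joinA i j b) - u i (joinA i k b))
          + condl σ i k b * (u i (joinA i k b) - u i (joinA i j b)))) = 0 :=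
      Finset.sum_eq_zero fun b _ => by ring
    linarith
  · intro hdist
    refine ⟨fun i a => wit σ i a, ?_⟩
    intro i j hj k hkj
    set cj := condl σ i j with hcjdef
    have hcj1 : ∑ b, cj b = 1 := condl_sum σ i j hj
    set Nj := norm2 cj with hNjdef
    have hNj : 0 < Nj := norm2_pos_of_sum_one cj hcj1
    have hrw1 : ∀ b, wit σ i (joinA i j b) = cj b / Nj := by
      intro b
      simp only [wit, joinA_same, restr_joinA, if_pos hj, hcjdef, hNjdef]
    by_cases hk : 0 < marg σ i k
    · set ck := condl σ i k with hckdef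
      have hck1 : ∑ b, ck b = 1 := condl_sum σ i k hk
      set Nk := norm2 ck with hNkdef
      have hNk : 0 < Nk := norm2_pos_of_sum_one ck hck1
      have hrw2 : ∀ b, wit σ i (joinA i k b) = ck b / Nk := by
        intro b
        simp only [wit, joinA_same, restr_joinA, if_pos hk, hckdef, hNkdef]
      have hne : cj ≠ ck := hdist i j k hj hk (Ne.symm hkj)
      have hcs : ∑ b, cj b * ck b < Nj * Nk := by
        have := strict_cs cj ck hcj1 hck1 hne
        simpa [norm2, hNjdef, hNkdef] using this
      have hsum : (∑ b : ∀ l : {l : Fin n // l ≠ i}, A l,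
          cj b * (wit σ i (joinA i j b) - wit σ i (joinA i k b)))
          = Nj - (∑ b, cj b * ck b) / Nk := by
        have step : ∀ b, cj b * (wit σ i (joinA i j b) - wit σ i (joinA i k b))
            = cj b ^ 2 / Nj - cj b * ck b / Nk := by
          intro b; rw [hrw1, hrw2]; ring
        rw [Finset.sum_congr rfl (fun b _ => step b), Finset.sum_sub_distrib,
          ← Finset.sum_div, ← Finset.sum_div, sum_sq_eq_norm2_sq, ← hNjdef, sq,
          mul_div_assoc, div_self (ne_of_gt hNj), mul_one]
      rw [hsum]
      have : (∑ b, cj b * ck b) / Nk < Nj := (div_lt_iff₀ hNk).mpr hcs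
      linarith
    · have hrw2 : ∀ b, wit σ i (joinA i k b) = 0 := by
        intro b
        simp only [wit, joinA_same, restr_joinA, if_neg hk]
      have hsum : (∑ b : ∀ l : {l : Fin n // l ≠ i}, A l,
          cj b * (wit σ i (joinA i j b) - wit σ i (joinA i k b))) = Nj := by
        have step : ∀ b, cj b * (wit σ i (joinA i j b) - wit σ i (joinA i k b))
            = cj b ^ 2 / Nj := by
          intro b; rw [hrw1, hrw2]; ring
        rw [Finset.sum_congr rfl (fun b _ => step b), ← Finset.sum_div,
          sum_sq_eq_norm2_sq, ← hNjdef, sq, mul_div_assoc, div_self (ne_of_gt hNj), mul_one]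
      rw [hsum]
      exact hNj
end

section
/- Fix a player i ∈ [n] and suppose there exist σ-supported actions j, k ∈ A_i with j ≠ k and σ_{ij} ≠ σ_{ik}. Then for every m ∈ A_i, ∑_{ℓ ∈ A_i} p_{iℓ} · t_{iℓm} ≥ p_{ij} t_{ijm} + p_{ik} t_{ikm} > 0. -/
open scoped BigOperators

section AuxLemmas

lemma aux_norm2_eq {X : Type*} [Fintype X] (f : X → ℝ) :
    norm2 f = ‖(WithLp.equiv 2 (X → ℝ)).symm f‖ := by
  rw [EuclideanSpace.norm_eq]
  simp [norm2, sq_abs]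

lemma aux_inner2_eq {X : Type*} [Fintype X] (f g : X → ℝ) :
    inner2 f g = inner ℝ ((WithLp.equiv 2 (X → ℝ)).symm f) ((WithLp.equiv 2 (X → ℝ)).symm g) := by
  simp [inner2, PiLp.inner_apply, RCLike.inner_apply, mul_comm]

lemma aux_norm2_nonneg {X : Type*} [Fintype X] (f : X → ℝ) : 0 ≤ norm2 f :=
  Real.sqrt_nonneg _

lemma aux_norm2_pos {X : Type*} [Fintype X] {f : X → ℝ} (hf : f ≠ 0) : 0 < norm2 f := by
  rw [aux_norm2_eq, norm_pos_iff]
  intro h0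
  apply hf
  have := congrArg (WithLp.equiv 2 (X → ℝ)) h0
  simpa using this

variable {n : ℕ} {A : Fin n → Type*} [∀ l, Fintype (A l)]

lemma aux_sum_condl {σ : (∀ l, A l) → ℝ} {i : Fin n} {l : A i} (h : 0 < marg σ i l) :
    ∑ b, condl σ i l b = 1 := by
  unfold condl
  simp only [if_pos h]
  rw [← Finset.sum_div]
  exact div_self (ne_of_gt h)

lemma aux_condl_zero {σ : (∀ l, A l) → ℝ} {i : Fin n} {l : A i} (h : ¬ 0 < marg σ i l) :
    condl σ i l = 0 :=
  funext fun _ => if_neg h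

lemma aux_condl_ne_zero {σ : (∀ l, A l) → ℝ} {i : Fin n} {l : A i} (h : 0 < marg σ i l) :
    condl σ i l ≠ 0 := by
  intro h0
  have := aux_sum_condl h
  rw [h0] at this
  simp at this

lemma aux_tq_nonneg (σ : (∀ l, A l) → ℝ) (i : Fin n) (l m : A i) : 0 ≤ tq σ i l m := by
  unfold tq
  split
  · exact aux_norm2_nonneg _
  · rename_i hm
    have hnm : 0 < norm2 (condl σ i m) := aux_norm2_pos hm
    rw [sub_nonneg, div_le_iff₀ hnm, aux_inner2_eq, aux_norm2_eq, aux_norm2_eq]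
    exact real_inner_le_norm _ _

lemma aux_tq_pos {σ : (∀ l, A l) → ℝ} {i : Fin n} {l : A i} (m : A i)
    (hl : 0 < marg σ i l) (hne : condl σ i l ≠ condl σ i m) : 0 < tq σ i l m := by
  have hfne : condl σ i l ≠ 0 := aux_condl_ne_zero hl
  have hnl : 0 < norm2 (condl σ i l) := aux_norm2_pos hfne
  unfold tq
  split
  · exact hnl
  · rename_i hm
    have hmm : 0 < marg σ i m := by
      by_contra h
      exact hm (aux_condl_zero h)
    have hnm : 0 < norm2 (condl σ i m) := aux_norm2_pos hm
    rw [sub_pos, div_lt_iff₀ hnm]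
    have hcs : inner2 (condl σ i l) (condl σ i m) ≤ norm2 (condl σ i l) * norm2 (condl σ i m) := by
      rw [aux_inner2_eq, aux_norm2_eq, aux_norm2_eq]
      exact real_inner_le_norm _ _
    rcases lt_or_eq_of_le hcs with h | h
    · exact h
    · exfalso
      have key : (norm2 (condl σ i m)) •
            ((WithLp.equiv 2 ((∀ l' : {l' : Fin n // l' ≠ i}, A l') → ℝ)).symm (condl σ i l)) =
          (norm2 (condl σ i l)) •
            ((WithLp.equiv 2 ((∀ l' : {l' : Fin n // l' ≠ i}, A l') → ℝ)).symm (condl σ i m)) := by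
        rw [aux_norm2_eq (condl σ i l), aux_norm2_eq (condl σ i m)]
        apply inner_eq_norm_mul_iff_real.mp
        rw [← aux_inner2_eq, ← aux_norm2_eq, ← aux_norm2_eq]
        exact h
      have hx : ∀ x, norm2 (condl σ i m) * condl σ i l x =
          norm2 (condl σ i l) * condl σ i m x := by
        intro x
        simpa using congrArg (fun v : WithLp 2 ((∀ l' : {l' : Fin n // l' ≠ i}, A l') → ℝ) => WithLp.ofLp v x) key
      have hnn : norm2 (condl σ i m) = norm2 (condl σ i l) := by
        calc norm2 (condl σ i m) = norm2 (condl σ i m) * ∑ x, condl σ i l x := by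
              rw [aux_sum_condl hl, mul_one]
          _ = ∑ x, norm2 (condl σ i m) * condl σ i l x := by rw [Finset.mul_sum]
          _ = ∑ x, norm2 (condl σ i l) * condl σ i m x := Finset.sum_congr rfl fun x _ => hx x
          _ = norm2 (condl σ i l) * ∑ x, condl σ i m x := by rw [Finset.mul_sum]
          _ = norm2 (condl σ i l) := by rw [aux_sum_condl hmm, mul_one]
      apply hne
      funext x
      have h2 := hx x
      rw [hnn] at h2
      exact mul_left_cancel₀ (ne_of_gt hnl) h2

end AuxLemmas

/-- **Positivity of the CCE gap.** If player `i` has `σ`-supported actions `j ≠ k` with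
`σ_{ij} ≠ σ_{ik}`, then for every deviation `m ∈ A i`,
`∑_{ℓ} p_{iℓ} t_{iℓm} ≥ p_{ij} t_{ijm} + p_{ik} t_{ikm} > 0`. -/
theorem sum_marg_tq_pos {n : ℕ} {A : Fin n → Type*}
    [∀ l, Fintype (A l)] [∀ l, Nonempty (A l)]
    (σ : (∀ l, A l) → ℝ) (hσ : IsMixed σ)
    (i : Fin n) (j k : A i) (hjk : j ≠ k)
    (hj : 0 < marg σ i j) (hk : 0 < marg σ i k)
    (hne : condl σ i j ≠ condl σ i k) :
    ∀ m : A i,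
      marg σ i j * tq σ i j m + marg σ i k * tq σ i k m ≤
          ∑ l : A i, marg σ i l * tq σ i l m ∧
        0 < marg σ i j * tq σ i j m + marg σ i k * tq σ i k m := by
  classical
  intro m
  have hmn : ∀ l : A i, 0 ≤ marg σ i l := fun l => Finset.sum_nonneg fun _ _ => hσ.1 _
  constructor
  · have hsub := Finset.sum_le_sum_of_subset_of_nonneg
      (Finset.subset_univ ({j, k} : Finset (A i)))
      (fun l _ _ => mul_nonneg (hmn l) (aux_tq_nonneg σ i l m))
    rwa [Finset.sum_pair hjk] at hsub
  · by_cases hc : condl σ i j = condl σ i m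
    · have hkm : condl σ i k ≠ condl σ i m := fun h => hne (hc.trans h.symm)
      have hpos := mul_pos hk (aux_tq_pos m hk hkm)
      have hj' : 0 ≤ marg σ i j * tq σ i j m := mul_nonneg (hmn j) (aux_tq_nonneg σ i j m)
      linarith
    · have hpos := mul_pos hj (aux_tq_pos m hj hc)
      have hk' : 0 ≤ marg σ i k * tq σ i k m := mul_nonneg (hmn k) (aux_tq_nonneg σ i k m)
      linarith
end
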